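/- Let δ > 0 and define the doubled smoothed ramp loss L : ℝ → ℝ by L(u) = 0 for u ≤ −δ, L(u) = (1 + u/δ)² for −δ < u ≤ 0, L(u) = 2 − (1 − u/δ)² for 0 < u < δ, and L(u) = 2 for u ≥ δ; define sign(t) = 1 if t ≥ 0 and sign(t) = −1 if t < 0. Let (Ω, ℱ, P) be a probability space, 𝒳 a measurable space, X : Ω → 𝒳 measurable, A : Ω → {−1, 1} a random variable, Y : Ω → ℝ a random variable with 0 ≤ Y ≤ h almost surely for some h > 0, and Δ : Ω → {0, 1} a random variable. Let π : {−1,1} × 𝒳 → ℝ be measurable with η ≤ π(a, x) ≤ 1 for all (a, x) and some η > 0, such that for each a ∈ {−1, 1}, ω ↦ π(a, X(ω)) is a version of P(A = a ∣ σ(X)). Let S̃ : ℝ × 𝒳 × {−1,1} → ℝ be measurable with η_C ≤ S̃ ≤ 1 for some η_C > 0, and fix τ ∈ ℝ. For measurable f : 𝒳 → ℝ and c ≥ 0 set V²_L(f, c) = E[−(Δ·max(0, c(τ − Y) + 1)/S̃(Y, X, A)) · L(A·f(X))/π(A, X)], and for measurable d : 𝒳 → {−1, 1} and c ≥ 0 set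 V²(d, c) = E[−(Δ·max(0, c(τ − Y) + 1)/S̃(Y, X, A)) · 1{A = d(X)}/π(A, X)]. If a measurable f̃ : 𝒳 → ℝ and c̃ ≥ 0 satisfy V²_L(f̃, c̃) ≥ V²_L(f, c) for every measurable f : 𝒳 → ℝ and every c ≥ 0, then V²(sign∘f̃, c̃) ≥ V²(d, c) for every measurable d : 𝒳 → {−1, 1} and every c ≥ 0. -/

import Mathlib

open MeasureTheory

/-- The doubled smoothed ramp loss: `L(u) = 0` for `u ≤ -δ`, `(1+u/δ)²` for `-δ < u ≤ 0`,
`2 - (1-u/δ)²` for `0 < u < δ`, and `2` for `u ≥ δ`. -/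
noncomputable def rampL (δ u : ℝ) : ℝ :=
  if u ≤ -δ then 0
  else if u ≤ 0 then (1 + u / δ) ^ 2
  else if u < δ then 2 - (1 - u / δ) ^ 2
  else 2

/-- `sgn t = 1` if `t ≥ 0` and `-1` if `t < 0`. -/
noncomputable def sgn (t : ℝ) : ℝ := if 0 ≤ t then 1 else -1

/-- Surrogate buffered-criterion value
`V²_L(f, c) = E[-(Δ·max(0, c(τ-Y)+1)/S̃(Y,X,A)) · L(A f(X)) / π(A,X)]`. -/
noncomputable def VLbuf {Ω 𝒳 : Type*} [MeasurableSpace Ω] [MeasurableSpace 𝒳]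
    (P : Measure Ω) (X : Ω → 𝒳) (A Y Δc : Ω → ℝ) (S : ℝ × 𝒳 × ℝ → ℝ) (π : ℝ × 𝒳 → ℝ)
    (τ δ : ℝ) (f : 𝒳 → ℝ) (c : ℝ) : ℝ :=
  ∫ ω, -(Δc ω * max 0 (c * (τ - Y ω) + 1) / S (Y ω, X ω, A ω))
      * rampL δ (A ω * f (X ω)) / π (A ω, X ω) ∂P

/-- Buffered-criterion value
`V²(d, c) = E[-(Δ·max(0, c(τ-Y)+1)/S̃(Y,X,A)) · 1{A = d(X)} / π(A,X)]`. -/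
noncomputable def Vbuf {Ω 𝒳 : Type*} [MeasurableSpace Ω] [MeasurableSpace 𝒳]
    (P : Measure Ω) (X : Ω → 𝒳) (A Y Δc : Ω → ℝ) (S : ℝ × 𝒳 × ℝ → ℝ) (π : ℝ × 𝒳 → ℝ)
    (τ : ℝ) (d : 𝒳 → ℝ) (c : ℝ) : ℝ :=
  ∫ ω, -(Δc ω * max 0 (c * (τ - Y ω) + 1) / S (Y ω, X ω, A ω))
      * (if A ω = d (X ω) then (1 : ℝ) else 0) / π (A ω, X ω) ∂P

lemma rampL_of_le {δ u : ℝ} (h : u ≤ -δ) : rampL δ u = 0 := if_pos h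

lemma rampL_of_ge {δ u : ℝ} (hδ : 0 < δ) (h : δ ≤ u) : rampL δ u = 2 := by
  unfold rampL
  rw [if_neg (by linarith), if_neg (by linarith), if_neg (by linarith)]

lemma rampL_of_mid_left {δ u : ℝ} (hδ : 0 < δ) (h1 : -δ < u) (h2 : u ≤ 0) :
    rampL δ u = (1 + u / δ) ^ 2 := by
  unfold rampL
  rw [if_neg (by linarith), if_pos h2]

lemma rampL_of_mid_right {δ u : ℝ} (hδ : 0 < δ) (h1 : 0 < u) (h2 : u < δ) :
    rampL δ u = 2 - (1 - u / δ) ^ 2 := by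
  unfold rampL
  rw [if_neg (by linarith), if_neg (by linarith), if_pos h2]

lemma rampL_nonneg {δ : ℝ} (hδ : 0 < δ) (u : ℝ) : 0 ≤ rampL δ u := by
  unfold rampL
  split_ifs with h1 h2 h3
  · exact le_refl 0
  · positivity
  · have hu : 0 < u := not_le.1 h2
    have ht : u / δ < 1 := (div_lt_one hδ).2 h3
    have ht0 : 0 < u / δ := div_pos hu hδ
    nlinarith
  · norm_num

lemma rampL_le_two {δ : ℝ} (hδ : 0 < δ) (u : ℝ) : rampL δ u ≤ 2 := by
  unfold rampL
  split_ifs with h1 h2 h3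
  · norm_num
  · have ht : -1 < u / δ := by rw [lt_div_iff₀ hδ]; push_neg at h1; linarith
    have ht0 : u / δ ≤ 0 := div_nonpos_of_nonpos_of_nonneg h2 hδ.le
    nlinarith
  · nlinarith [sq_nonneg (1 - u / δ)]
  · exact le_refl 2

lemma rampL_add_neg {δ : ℝ} (hδ : 0 < δ) (u : ℝ) : rampL δ u + rampL δ (-u) = 2 := by
  rcases le_or_gt u (-δ) with h | h
  · rw [rampL_of_le h, rampL_of_ge hδ (by linarith)]; norm_num
  rcases lt_or_ge u 0 with h2 | h2
  · rw [rampL_of_mid_left hδ h h2.le, rampL_of_mid_right hδ (by linarith) (by linarith)]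
    have e : 1 - -u / δ = 1 + u / δ := by ring
    rw [e]; ring
  rcases eq_or_lt_of_le h2 with h3 | h3
  · rw [← h3, neg_zero, rampL_of_mid_left hδ (by linarith) le_rfl]
    norm_num
  rcases lt_or_ge u δ with h4 | h4
  · rw [rampL_of_mid_right hδ h3 h4, rampL_of_mid_left hδ (by linarith) (by linarith)]
    have e : 1 + -u / δ = 1 - u / δ := by ring
    rw [e]; ring
  · rw [rampL_of_ge hδ h4, rampL_of_le (by linarith)]; norm_num

lemma rampL_neg {δ : ℝ} (hδ : 0 < δ) (u : ℝ) : rampL δ (-u) = 2 - rampL δ u := by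
  linarith [rampL_add_neg hδ u]

lemma le_of_rampL_eq_two {δ u : ℝ} (hδ : 0 < δ) (h : rampL δ u = 2) : δ ≤ u := by
  unfold rampL at h
  split_ifs at h with h1 h2 h3
  · norm_num at h
  · have ht : -1 < u / δ := by rw [lt_div_iff₀ hδ]; push_neg at h1; linarith
    have ht0 : u / δ ≤ 0 := div_nonpos_of_nonpos_of_nonneg h2 hδ.le
    nlinarith
  · exfalso
    have h5 : (1 - u / δ) ^ 2 = 0 := by linarith
    have h6 : 1 - u / δ = 0 := pow_eq_zero_iff two_ne_zero |>.1 h5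
    have : u = δ := by field_simp at h6; linarith
    linarith
  · linarith [not_lt.1 h3]

lemma le_of_rampL_eq_zero {δ u : ℝ} (hδ : 0 < δ) (h : rampL δ u = 0) : u ≤ -δ := by
  unfold rampL at h
  split_ifs at h with h1 h2 h3
  · exact h1
  · have h6 : 1 + u / δ = 0 := pow_eq_zero_iff two_ne_zero |>.1 h
    have : u = -δ := by field_simp at h6; linarith
    exact this.le
  · exfalso
    have hu : 0 < u := not_le.1 h2
    have ht : u / δ < 1 := (div_lt_one hδ).2 h3
    have ht0 : 0 < u / δ := div_pos hu hδ
    nlinarith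
  · norm_num at h

lemma measurable_rampL (δ : ℝ) : Measurable (rampL δ) := by
  unfold rampL
  refine Measurable.ite (measurableSet_le measurable_id measurable_const) measurable_const ?_
  refine Measurable.ite (measurableSet_le measurable_id measurable_const) ?_ ?_
  · exact (measurable_const.add (measurable_id.div_const δ)).pow measurable_const
  · refine Measurable.ite (measurableSet_lt measurable_id measurable_const) ?_ measurable_const
    exact measurable_const.sub ((measurable_const.sub (measurable_id.div_const δ)).pow measurable_const)

/-- The comap σ-algebra generated by `X`. -/
@[reducible] def mCom {Ω 𝒳 : Type*} [MeasurableSpace 𝒳] (X : Ω → 𝒳) : MeasurableSpace Ω :=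
  MeasurableSpace.comap X inferInstance

/-- Theorem 4 of the paper: Fisher consistency of the surrogate loss for the
buffered criterion. If `(f̃, c̃)` with `c̃ ≥ 0` maximizes the surrogate value `V²_L` over
measurable `f` and `c ≥ 0`, then `(sign ∘ f̃, c̃)` maximizes `V²` over measurable rules
`d : 𝒳 → {-1,1}` and `c ≥ 0`. -/
theorem stmt_9 {Ω 𝒳 : Type*} [MeasurableSpace Ω] [MeasurableSpace 𝒳]
    (P : Measure Ω) [IsProbabilityMeasure P]
    (X : Ω → 𝒳) (hX : Measurable X)
    (A : Ω → ℝ) (hA : Measurable A) (hAval : ∀ ω, A ω = 1 ∨ A ω = -1)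
    (Y : Ω → ℝ) (hY : Measurable Y)
    (h : ℝ) (hh : 0 < h) (hYb : ∀ᵐ ω ∂P, 0 ≤ Y ω ∧ Y ω ≤ h)
    (Δc : Ω → ℝ) (hΔm : Measurable Δc) (hΔval : ∀ ω, Δc ω = 0 ∨ Δc ω = 1)
    (π : ℝ × 𝒳 → ℝ) (hπ : Measurable π) (η : ℝ) (hη : 0 < η)
    (hπb : ∀ a x, η ≤ π (a, x) ∧ π (a, x) ≤ 1)
    (hπver : ∀ a : ℝ, (a = 1 ∨ a = -1) →
      (fun ω => π (a, X ω)) =ᵐ[P]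
        P[fun ω => if A ω = a then (1 : ℝ) else 0 |
          MeasurableSpace.comap X inferInstance])
    (S : ℝ × 𝒳 × ℝ → ℝ) (hS : Measurable S) (ηC : ℝ) (hηC : 0 < ηC)
    (hSb : ∀ t x a, ηC ≤ S (t, x, a) ∧ S (t, x, a) ≤ 1)
    (τ : ℝ) (δ : ℝ) (hδ : 0 < δ)
    (ftilde : 𝒳 → ℝ) (hftilde : Measurable ftilde) (ctilde : ℝ) (hctilde : 0 ≤ ctilde)
    (hopt : ∀ f : 𝒳 → ℝ, Measurable f → ∀ c : ℝ, 0 ≤ c →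
      VLbuf P X A Y Δc S π τ δ f c ≤ VLbuf P X A Y Δc S π τ δ ftilde ctilde) :
    ∀ d : 𝒳 → ℝ, Measurable d → (∀ x, d x = 1 ∨ d x = -1) → ∀ c : ℝ, 0 ≤ c →
      Vbuf P X A Y Δc S π τ d c
        ≤ Vbuf P X A Y Δc S π τ (fun x => sgn (ftilde x)) ctilde := by
  classical
  intro d hd hdval c hc
  -- Part 1: scaling identity `VLbuf (δ·e) c = 2 * Vbuf e c` for ±1-valued e
  have key1 : ∀ (e : 𝒳 → ℝ), (∀ x, e x = 1 ∨ e x = -1) → ∀ c' : ℝ,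
      VLbuf P X A Y Δc S π τ δ (fun x => δ * e x) c' = 2 * Vbuf P X A Y Δc S π τ e c' := by
    intro e he c'
    unfold VLbuf Vbuf
    rw [← integral_const_mul]
    refine integral_congr_ae (Filter.Eventually.of_forall fun ω => ?_)
    have hr : rampL δ (A ω * (δ * e (X ω))) = 2 * (if A ω = e (X ω) then (1:ℝ) else 0) := by
      rcases hAval ω with h1 | h1 <;> rcases he (X ω) with h2 | h2 <;> rw [h1, h2]
      · rw [show (1:ℝ) * (δ * 1) = δ by ring, rampL_of_ge hδ le_rfl, if_pos rfl]; ring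
      · rw [show (1:ℝ) * (δ * -1) = -δ by ring, rampL_of_le le_rfl, if_neg (by norm_num)]; ring
      · rw [show (-1:ℝ) * (δ * 1) = -δ by ring, rampL_of_le le_rfl, if_neg (by norm_num)]; ring
      · rw [show (-1:ℝ) * (δ * -1) = δ by ring, rampL_of_ge hδ le_rfl, if_pos rfl]; ring
    simp only [hr]; ring
  have hsgnm : Measurable fun x => sgn (ftilde x) := by
    unfold sgn
    exact Measurable.ite (measurableSet_le measurable_const hftilde) measurable_const
      measurable_const
  have hsgnval : ∀ x : 𝒳, sgn (ftilde x) = 1 ∨ sgn (ftilde x) = -1 := by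
    intro x; unfold sgn; split_ifs
    · exact Or.inl rfl
    · exact Or.inr rfl
  -- Part 2 setup
  have hm : mCom X ≤ (inferInstance : MeasurableSpace Ω) := hX.comap_le
  have hXm : Measurable[mCom X] X := measurable_iff_comap_le.mpr le_rfl
  set Z : Ω → ℝ := fun ω =>
    Δc ω * max 0 (ctilde * (τ - Y ω) + 1) / S (Y ω, X ω, A ω) / π (A ω, X ω) with hZ_def
  have hVL : ∀ f : 𝒳 → ℝ, VLbuf P X A Y Δc S π τ δ f ctilde
      = - ∫ ω, Z ω * rampL δ (A ω * f (X ω)) ∂P := by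
    intro f
    unfold VLbuf
    rw [← integral_neg]
    exact integral_congr_ae (Filter.Eventually.of_forall fun ω => by simp only [hZ_def]; ring)
  have hSYm : Measurable fun ω => S (Y ω, X ω, A ω) := hS.comp (hY.prodMk (hX.prodMk hA))
  have hπAm : Measurable fun ω => π (A ω, X ω) := hπ.comp (hA.prodMk hX)
  have hmaxm : Measurable fun ω => max 0 (ctilde * (τ - Y ω) + 1) :=
    measurable_const.max (((measurable_const.sub hY).const_mul ctilde).add_const 1)
  have hZm : Measurable Z := ((hΔm.mul hmaxm).div hSYm).div hπAm
  have hSpos : ∀ ω, 0 < S (Y ω, X ω, A ω) := fun ω => lt_of_lt_of_le hηC (hSb _ _ _).1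
  have hπpos : ∀ ω, 0 < π (A ω, X ω) := fun ω => lt_of_lt_of_le hη (hπb _ _).1
  have hΔnn : ∀ ω, 0 ≤ Δc ω := by
    intro ω; rcases hΔval ω with h' | h' <;> rw [h'] <;> norm_num
  have hΔle : ∀ ω, Δc ω ≤ 1 := by
    intro ω; rcases hΔval ω with h' | h' <;> rw [h'] <;> norm_num
  have hZnn : ∀ ω, 0 ≤ Z ω := fun ω =>
    div_nonneg (div_nonneg (mul_nonneg (hΔnn ω) (le_max_left _ _)) (hSpos ω).le) (hπpos ω).le
  set M : ℝ := (ctilde * (|τ| + h) + 1) / ηC / η with hM_def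
  have hBnn : 0 ≤ ctilde * (|τ| + h) + 1 := by
    have : 0 ≤ ctilde * (|τ| + h) := mul_nonneg hctilde (by positivity)
    linarith
  have hM0 : 0 ≤ M := div_nonneg (div_nonneg hBnn hηC.le) hη.le
  have hZbd : ∀ᵐ ω ∂P, Z ω ≤ M := by
    filter_upwards [hYb] with ω hY'
    have h2 : max 0 (ctilde * (τ - Y ω) + 1) ≤ ctilde * (|τ| + h) + 1 := by
      apply max_le hBnn
      have h3 : τ - Y ω ≤ |τ| + h := by
        have := le_abs_self τ
        linarith [hY'.1]
      have := mul_le_mul_of_nonneg_left h3 hctilde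
      linarith
    have h1 : Δc ω * max 0 (ctilde * (τ - Y ω) + 1) ≤ ctilde * (|τ| + h) + 1 := by
      have hmnn : 0 ≤ max 0 (ctilde * (τ - Y ω) + 1) := le_max_left _ _
      calc Δc ω * max 0 (ctilde * (τ - Y ω) + 1)
          ≤ 1 * max 0 (ctilde * (τ - Y ω) + 1) :=
            mul_le_mul_of_nonneg_right (hΔle ω) hmnn
        _ ≤ ctilde * (|τ| + h) + 1 := by rw [one_mul]; exact h2
    have hstep1 : Δc ω * max 0 (ctilde * (τ - Y ω) + 1) / S (Y ω, X ω, A ω)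
        ≤ (ctilde * (|τ| + h) + 1) / ηC :=
      div_le_div₀ hBnn h1 hηC (hSb _ _ _).1
    exact div_le_div₀ (div_nonneg hBnn hηC.le) hstep1 hη (hπb _ _).1
  have hIntbd : ∀ (φ : Ω → ℝ), AEStronglyMeasurable φ P → ∀ C : ℝ,
      (∀ᵐ ω ∂P, |φ ω| ≤ C) → Integrable φ P := by
    intro φ hφ C hC
    exact ⟨hφ, HasFiniteIntegral.of_bounded (C := C) (by simpa [Real.norm_eq_abs] using hC)⟩
  set G : Ω → ℝ := fun ω => Z ω * A ω with hG_def
  have hGm : Measurable G := hZm.mul hA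
  have hAabs : ∀ ω, |A ω| = 1 := by
    intro ω; rcases hAval ω with h' | h' <;> rw [h'] <;> norm_num
  have hGbd : ∀ᵐ ω ∂P, |G ω| ≤ M := by
    filter_upwards [hZbd] with ω h1
    simp only [hG_def]
    rw [abs_mul, hAabs ω, mul_one, abs_of_nonneg (hZnn ω)]
    exact h1
  have hGint : Integrable G P := hIntbd G hGm.aestronglyMeasurable M hGbd
  set W : Ω → ℝ := P[G | mCom X] with hW_def
  have hWint : Integrable W P := integrable_condExp
  have hWm : Measurable[mCom X] W := stronglyMeasurable_condExp.measurable
  -- pull-out property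
  have hpull : ∀ (θ : Ω → ℝ), Measurable[mCom X] θ → (∀ ω, |θ ω| ≤ 2) →
      ∫ ω, θ ω * G ω ∂P = ∫ ω, θ ω * W ω ∂P := by
    intro θ hθ hθb
    have hθ0 : Measurable θ := hθ.mono hm le_rfl
    have hbdd : ∃ C, ∀ ω, ‖θ ω‖ ≤ C := ⟨2, fun ω => by
      simpa [Real.norm_eq_abs] using hθb ω⟩
    have hint : Integrable (θ * G) P := hGint.bdd_mul hθ0.aestronglyMeasurable (Filter.Eventually.of_forall hbdd.choose_spec)
    have hce : P[θ * G | mCom X] =ᵐ[P] θ * P[G | mCom X] :=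
      condExp_mul_of_stronglyMeasurable_left hθ.stronglyMeasurable hint hGint
    calc ∫ ω, θ ω * G ω ∂P = ∫ ω, (P[θ * G | mCom X]) ω ∂P := (integral_condExp hm).symm
      _ = ∫ ω, (θ * P[G | mCom X]) ω ∂P := integral_congr_ae hce
      _ = ∫ ω, θ ω * W ω ∂P := rfl
  -- J integrands and split
  have hJint : ∀ f : 𝒳 → ℝ, Measurable f →
      Integrable (fun ω => Z ω * rampL δ (A ω * f (X ω))) P := by
    intro f hf
    refine hIntbd _ (hZm.mul ((measurable_rampL δ).comp
      (hA.mul (hf.comp hX)))).aestronglyMeasurable (M * 2) ?_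
    filter_upwards [hZbd] with ω h1
    rw [abs_mul, abs_of_nonneg (hZnn ω), abs_of_nonneg (rampL_nonneg hδ _)]
    exact mul_le_mul h1 (rampL_le_two hδ _) (rampL_nonneg hδ _) hM0
  have hGR_int : ∀ f : 𝒳 → ℝ, Measurable f →
      Integrable (fun ω => rampL δ (f (X ω)) * G ω) P := by
    intro f hf
    exact hGint.bdd_mul ((measurable_rampL δ).comp (hf.comp hX)).aestronglyMeasurable
      (c := 2) (Filter.Eventually.of_forall fun ω => by
        rw [Real.norm_eq_abs, abs_of_nonneg (rampL_nonneg hδ _)]; exact rampL_le_two hδ _)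
  have hWR_int : ∀ f : 𝒳 → ℝ, Measurable f →
      Integrable (fun ω => rampL δ (f (X ω)) * W ω) P := by
    intro f hf
    exact hWint.bdd_mul ((measurable_rampL δ).comp (hf.comp hX)).aestronglyMeasurable
      (c := 2) (Filter.Eventually.of_forall fun ω => by
        rw [Real.norm_eq_abs, abs_of_nonneg (rampL_nonneg hδ _)]; exact rampL_le_two hδ _)
  have hZA_int : Integrable (fun ω => Z ω * (1 - A ω)) P := by
    refine hIntbd _ (hZm.mul (measurable_const.sub hA)).aestronglyMeasurable (M * 2) ?_
    filter_upwards [hZbd] with ω h1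
    rw [abs_mul, abs_of_nonneg (hZnn ω)]
    have h2 : |1 - A ω| ≤ 2 := by rcases hAval ω with h' | h' <;> rw [h'] <;> norm_num
    exact mul_le_mul h1 h2 (abs_nonneg _) hM0
  have hsplit : ∀ f : 𝒳 → ℝ, Measurable f →
      ∫ ω, Z ω * rampL δ (A ω * f (X ω)) ∂P
        = (∫ ω, rampL δ (f (X ω)) * G ω ∂P) + ∫ ω, Z ω * (1 - A ω) ∂P := by
    intro f hf
    rw [← integral_add (hGR_int f hf) hZA_int]
    refine integral_congr_ae (Filter.Eventually.of_forall fun ω => ?_)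
    simp only [hG_def]
    rcases hAval ω with h' | h'
    · rw [h', one_mul]; ring
    · rw [h', neg_one_mul, rampL_neg hδ]; ring
  have hθm : ∀ f : 𝒳 → ℝ, Measurable f →
      Measurable[mCom X] fun ω => rampL δ (f (X ω)) :=
    fun f hf => ((measurable_rampL δ).comp hf).comp hXm
  have hθb : ∀ (f : 𝒳 → ℝ) (ω : Ω), |rampL δ (f (X ω))| ≤ 2 := fun f ω => by
    rw [abs_of_nonneg (rampL_nonneg hδ _)]; exact rampL_le_two hδ _
  -- optimality at the W level
  have hT : ∀ f : 𝒳 → ℝ, Measurable f →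
      ∫ ω, rampL δ (ftilde (X ω)) * W ω ∂P ≤ ∫ ω, rampL δ (f (X ω)) * W ω ∂P := by
    intro f hf
    have h1 := hopt f hf ctilde hctilde
    rw [hVL f, hVL ftilde] at h1
    have h2 : ∫ ω, Z ω * rampL δ (A ω * ftilde (X ω)) ∂P
        ≤ ∫ ω, Z ω * rampL δ (A ω * f (X ω)) ∂P := by linarith
    rw [hsplit f hf, hsplit ftilde hftilde] at h2
    have e1 := hpull _ (hθm ftilde hftilde) (hθb ftilde)
    have e2 := hpull _ (hθm f hf) (hθb f)
    linarith
  -- the negative set of W, as a preimage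
  obtain ⟨E, hEm, hEpre⟩ : ∃ E, MeasurableSet E ∧ X ⁻¹' E = W ⁻¹' Set.Iio 0 :=
    hWm measurableSet_Iio
  set g' : 𝒳 → ℝ := fun x => if x ∈ E then δ else -δ with hg'_def
  have hg'm : Measurable g' := Measurable.ite hEm measurable_const measurable_const
  have hrg' : ∀ x, rampL δ (g' x) = if x ∈ E then 2 else 0 := by
    intro x; simp only [hg'_def]; split_ifs with hx
    · exact rampL_of_ge hδ le_rfl
    · exact rampL_of_le le_rfl
  have hqnn : ∀ ω, 0 ≤ rampL δ (ftilde (X ω)) * W ω - rampL δ (g' (X ω)) * W ω := by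
    intro ω
    rw [hrg']
    by_cases hx : X ω ∈ E
    · have hW : W ω < 0 := by
        have h5 : ω ∈ W ⁻¹' Set.Iio 0 := by rw [← hEpre]; exact hx
        simpa using h5
      rw [if_pos hx]
      nlinarith [rampL_le_two hδ (ftilde (X ω))]
    · have hW : 0 ≤ W ω := by
        by_contra hWc
        push_neg at hWc
        have h5 : ω ∈ W ⁻¹' Set.Iio 0 := by simpa using hWc
        rw [← hEpre] at h5
        exact hx h5
      rw [if_neg hx]
      nlinarith [rampL_nonneg hδ (ftilde (X ω))]
  have hqint : Integrable
      (fun ω => rampL δ (ftilde (X ω)) * W ω - rampL δ (g' (X ω)) * W ω) P :=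
    (hWR_int ftilde hftilde).sub (hWR_int g' hg'm)
  have hqzero : ∫ ω, (rampL δ (ftilde (X ω)) * W ω - rampL δ (g' (X ω)) * W ω) ∂P = 0 := by
    have h1 := hT g' hg'm
    have h2 : 0 ≤ ∫ ω, (rampL δ (ftilde (X ω)) * W ω - rampL δ (g' (X ω)) * W ω) ∂P :=
      integral_nonneg hqnn
    have h3 : ∫ ω, (rampL δ (ftilde (X ω)) * W ω - rampL δ (g' (X ω)) * W ω) ∂P
        = (∫ ω, rampL δ (ftilde (X ω)) * W ω ∂P) - ∫ ω, rampL δ (g' (X ω)) * W ω ∂P :=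
      integral_sub (hWR_int ftilde hftilde) (hWR_int g' hg'm)
    linarith
  have hqae : ∀ᵐ ω ∂P,
      rampL δ (ftilde (X ω)) * W ω - rampL δ (g' (X ω)) * W ω = 0 := by
    have := (integral_eq_zero_iff_of_nonneg hqnn hqint).1 hqzero
    filter_upwards [this] with ω hω
    exact hω
  -- final pointwise inequality
  have hfin : ∀ᵐ ω ∂P,
      rampL δ (δ * sgn (ftilde (X ω))) * W ω - rampL δ (ftilde (X ω)) * W ω ≤ 0 := by
    filter_upwards [hqae] with ω h0
    rw [hrg'] at h0
    by_cases hx : X ω ∈ E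
    · have hW : W ω < 0 := by
        have h5 : ω ∈ W ⁻¹' Set.Iio 0 := by rw [← hEpre]; exact hx
        simpa using h5
      rw [if_pos hx] at h0
      have hr2 : rampL δ (ftilde (X ω)) = 2 := by
        have h6 : (rampL δ (ftilde (X ω)) - 2) * W ω = 0 := by linarith
        rcases mul_eq_zero.1 h6 with h7 | h7
        · linarith
        · exact absurd h7 hW.ne
      have hge : δ ≤ ftilde (X ω) := le_of_rampL_eq_two hδ hr2
      have hsg : sgn (ftilde (X ω)) = 1 := by
        unfold sgn; rw [if_pos (by linarith)]
      rw [hsg, mul_one, rampL_of_ge hδ le_rfl, hr2]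
      linarith
    · have hW : 0 ≤ W ω := by
        by_contra hWc
        push_neg at hWc
        have h5 : ω ∈ W ⁻¹' Set.Iio 0 := by simpa using hWc
        rw [← hEpre] at h5
        exact hx h5
      rw [if_neg hx] at h0
      rcases eq_or_lt_of_le hW with hW0 | hWpos
      · rw [← hW0]; ring_nf; norm_num
      · have hr0 : rampL δ (ftilde (X ω)) = 0 := by
          have h6 : rampL δ (ftilde (X ω)) * W ω = 0 := by linarith
          rcases mul_eq_zero.1 h6 with h7 | h7
          · exact h7
          · exact absurd h7 hWpos.ne'
        have hle : ftilde (X ω) ≤ -δ := le_of_rampL_eq_zero hδ hr0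
        have hsg : sgn (ftilde (X ω)) = -1 := by
          unfold sgn; rw [if_neg (by push_neg; linarith)]
        rw [hsg, show δ * (-1:ℝ) = -δ by ring, rampL_of_le le_rfl, hr0]
        linarith
  -- conclude part 2
  have hpart2 : VLbuf P X A Y Δc S π τ δ ftilde ctilde
      ≤ VLbuf P X A Y Δc S π τ δ (fun x => δ * sgn (ftilde x)) ctilde := by
    have hfsm : Measurable fun x => δ * sgn (ftilde x) := hsgnm.const_mul δ
    have h4 : ∫ ω, rampL δ (δ * sgn (ftilde (X ω))) * W ω ∂P
        ≤ ∫ ω, rampL δ (ftilde (X ω)) * W ω ∂P := by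
      have h5 := integral_nonpos_of_ae hfin
      have h6 : ∫ ω, (rampL δ (δ * sgn (ftilde (X ω))) * W ω
            - rampL δ (ftilde (X ω)) * W ω) ∂P
          = (∫ ω, rampL δ (δ * sgn (ftilde (X ω))) * W ω ∂P)
            - ∫ ω, rampL δ (ftilde (X ω)) * W ω ∂P :=
        integral_sub (hWR_int _ hfsm) (hWR_int ftilde hftilde)
      linarith
    rw [hVL ftilde, hVL (fun x => δ * sgn (ftilde x))]
    rw [hsplit ftilde hftilde, hsplit _ hfsm]
    have e1 := hpull _ (hθm ftilde hftilde) (hθb ftilde)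
    have e2 := hpull _ (hθm _ hfsm) (hθb (fun x => δ * sgn (ftilde x)))
    linarith
  -- final chain
  have c1 : VLbuf P X A Y Δc S π τ δ (fun x => δ * d x) c = 2 * Vbuf P X A Y Δc S π τ d c :=
    key1 d hdval c
  have c2 : VLbuf P X A Y Δc S π τ δ (fun x => δ * sgn (ftilde x)) ctilde
      = 2 * Vbuf P X A Y Δc S π τ (fun x => sgn (ftilde x)) ctilde :=
    key1 (fun x => sgn (ftilde x)) hsgnval ctilde
  have c3 := hopt (fun x => δ * d x) (hd.const_mul δ) c hc
  linarith
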